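/- Let G be a generating function of a probability distribution with radius of convergence 1 and G'(1)=1, and let c ∈ (0,1). Define the distribution p by its generating function g(z) = G(cz)/G(c). Then G(c) > c, the radius of convergence of g is ρ = 1/c, g_{ℕ,ρ}'(1) = G'(1) = 1, and g_{{0},ρ}'(1) = cG'(1)/G(c) < 1; hence p is generic for ℕ but non-generic for {0}. -/

import Mathlib

open scoped Classical

/-- The normalizing constant `c_A(θ)`. -/
noncomputable def cA (p : ℕ → ℝ) (A : Set ℕ) (θ : ℝ) : ℝ :=
  (θ - ∑' k : ℕ, (Aᶜ).indicator (fun k => θ ^ k * p k) k) /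
    (θ * ∑' k : ℕ, A.indicator (fun k => θ ^ k * p k) k)

/-- The modified offspring distribution `p_{A,θ}`. -/
noncomputable def pMod (p : ℕ → ℝ) (A : Set ℕ) (θ : ℝ) : ℕ → ℝ :=
  fun k => if k ∈ A then cA p A θ * θ ^ k * p k else θ ^ ((k : ℤ) - 1) * p k

/-- `I_A`: the set of `θ > 0` for which `p_{A,θ}` is a probability distribution. -/
def IA (p : ℕ → ℝ) (A : Set ℕ) : Set ℝ :=
  {θ | 0 < θ ∧ (∀ k, 0 ≤ pMod p A θ k) ∧ ∑' k, pMod p A θ k = 1}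

lemma bern_strict {c : ℝ} (hc0 : 0 < c) (hc1 : c < 1) :
    ∀ k : ℕ, 2 ≤ k → 1 + (k : ℝ) * (c - 1) < c ^ k := by
  intro k hk
  induction k, hk using Nat.le_induction with
  | base => push_cast; nlinarith
  | succ n hn ih =>
    have h2 : c * (1 + (n:ℝ) * (c-1)) < c * c ^ n := mul_lt_mul_of_pos_left ih hc0
    have h3 : c ^ (n+1) = c ^ n * c := pow_succ c n
    have hn2 : (2:ℝ) ≤ (n:ℝ) := by exact_mod_cast hn
    push_cast
    nlinarith [sq_nonneg (c-1)]

theorem stmt8 (q : ℕ → ℝ) (c : ℝ)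
    (hq : ∀ k, 0 ≤ q k) (hqsum : ∑' k, q k = 1)
    -- the radius of convergence of `G` is `1` (it is automatically `≥ 1`)
    (hradG : ∀ r : ℝ, 1 < r → ¬ Summable (fun k : ℕ => q k * r ^ k))
    -- `G'(1) = 1`
    (hGmean : Summable (fun k : ℕ => (k : ℝ) * q k))
    (hG'1 : ∑' k : ℕ, (k : ℝ) * q k = 1)
    (hc0 : 0 < c) (hc1 : c < 1)
    -- `p` is the distribution with generating function `g(z) = G(cz)/G(c)`
    (p : ℕ → ℝ) (hpdef : ∀ k, p k = q k * c ^ k / ∑' j : ℕ, q j * c ^ j) :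
    -- `G(c) > c`
    c < (∑' j : ℕ, q j * c ^ j)
    -- the radius of convergence of `g` is `ρ = 1/c`
    ∧ (∀ r : ℝ, 0 ≤ r → r < 1 / c → Summable (fun k : ℕ => p k * r ^ k))
    ∧ (∀ r : ℝ, 1 / c < r → ¬ Summable (fun k : ℕ => p k * r ^ k))
    -- `g_{ℕ,ρ}'(1) = G'(1) = 1`
    ∧ (∑' k : ℕ, (k : ℝ) * pMod p Set.univ (1 / c) k) = 1
    -- `g_{{0},ρ}'(1) = c G'(1)/G(c) < 1`
    ∧ (∑' k : ℕ, (k : ℝ) * pMod p {0} (1 / c) k) = c / (∑' j : ℕ, q j * c ^ j)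
    ∧ c / (∑' j : ℕ, q j * c ^ j) < 1
    -- hence `p` is generic for `ℕ` but non-generic for `{0}`
    ∧ (∃ θ ∈ IA p Set.univ, (∑' k : ℕ, (k : ℝ) * pMod p Set.univ θ k) = 1)
    ∧ (¬ ∃ θ ∈ IA p {0}, (∑' k : ℕ, (k : ℝ) * pMod p {0} θ k) = 1) := by
  set Gc := ∑' j : ℕ, q j * c ^ j with hGcdef
  have hqS : Summable q := by
    by_contra h
    rw [tsum_eq_zero_of_not_summable h] at hqsum
    norm_num at hqsum
  have hGcS : Summable (fun j : ℕ => q j * c ^ j) := by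
    refine Summable.of_nonneg_of_le (fun k => mul_nonneg (hq k) (pow_nonneg hc0.le k)) (fun k => ?_) hqS
    exact mul_le_of_le_one_right (hq k) (pow_le_one₀ hc0.le hc1.le)
  -- exists k0 ≥ 2 with q k0 > 0
  have hk0 : ∃ k, 2 ≤ k ∧ 0 < q k := by
    by_contra h
    push_neg at h
    refine hradG 2 (by norm_num) ?_
    refine summable_of_ne_finset_zero (s := {0, 1}) fun k hk => ?_
    simp only [Finset.mem_insert, Finset.mem_singleton, not_or] at hk
    have : q k = 0 := le_antisymm (h k (by omega)) (hq k)
    simp [this]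
  -- G(c) > c
  have hfS : Summable (fun k : ℕ => q k + (c - 1) * ((k : ℝ) * q k)) :=
    hqS.add (hGmean.mul_left _)
  have hGc : c < Gc := by
    obtain ⟨k0, hk02, hk0pos⟩ := hk0
    have hle : ∀ k : ℕ, q k + (c - 1) * ((k : ℝ) * q k) ≤ q k * c ^ k := by
      intro k
      have hb : 1 + (k : ℝ) * (c - 1) ≤ c ^ k := by
        have := one_add_mul_le_pow (a := c - 1) (by linarith) k
        simpa using this
      nlinarith [hq k]
    have hlt : q k0 + (c - 1) * ((k0 : ℝ) * q k0) < q k0 * c ^ k0 := by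
      have hb := bern_strict hc0 hc1 k0 hk02
      nlinarith
    have h1 : ∑' k : ℕ, (q k + (c - 1) * ((k : ℝ) * q k)) < Gc :=
      Summable.tsum_lt_tsum hle hlt hfS hGcS
    have h2 : ∑' k : ℕ, (q k + (c - 1) * ((k : ℝ) * q k)) = c := by
      rw [Summable.tsum_add hqS (hGmean.mul_left _), tsum_mul_left, hqsum, hG'1]
      ring
    linarith
  have hGcpos : 0 < Gc := lt_trans hc0 hGc
  -- radius
  have hrad1 : ∀ r : ℝ, 0 ≤ r → r < 1 / c → Summable (fun k : ℕ => p k * r ^ k) := by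
    intro r hr hrc
    have hcr : c * r < 1 := by
      have := mul_lt_mul_of_pos_left hrc hc0
      rwa [mul_one_div_cancel hc0.ne'] at this
    have heq : ∀ k : ℕ, p k * r ^ k = q k * (c * r) ^ k * Gc⁻¹ := by
      intro k
      rw [hpdef, mul_pow]
      field_simp
    rw [funext heq]
    refine Summable.mul_right _ ?_
    refine Summable.of_nonneg_of_le (fun k => mul_nonneg (hq k) (pow_nonneg (by positivity) k)) (fun k => ?_) hqS
    exact mul_le_of_le_one_right (hq k) (pow_le_one₀ (by positivity) hcr.le)
  have hrad2 : ∀ r : ℝ, 1 / c < r → ¬ Summable (fun k : ℕ => p k * r ^ k) := by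
    intro r hr hS
    have hcr : 1 < c * r := by
      have := mul_lt_mul_of_pos_left hr hc0
      rwa [mul_one_div_cancel hc0.ne'] at this
    refine hradG (c * r) hcr ?_
    refine (hS.mul_right Gc).congr fun k => ?_
    rw [hpdef, mul_pow]
    field_simp
  -- pMod for univ at 1/c equals q
  have hθkp : ∀ k : ℕ, (1 / c) ^ k * p k = q k * Gc⁻¹ := by
    intro k
    rw [hpdef, one_div, inv_pow]
    rw [div_eq_mul_inv]
    field_simp
  have hcAuniv : cA p Set.univ (1 / c) = Gc := by
    unfold cA
    have h2 : ∑' k : ℕ, (Set.univᶜ).indicator (fun k : ℕ => (1 / c) ^ k * p k) k = 0 := by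
      simp [Set.compl_univ]
    have h3 : ∑' k : ℕ, (Set.univ : Set ℕ).indicator (fun k : ℕ => (1 / c) ^ k * p k) k
        = Gc⁻¹ := by
      simp only [Set.indicator_univ]
      rw [tsum_congr hθkp, tsum_mul_right, hqsum, one_mul]
    rw [h2, h3]
    rw [sub_zero]
    rw [div_eq_iff (by positivity)]
    field_simp
  have hpuniv : pMod p Set.univ (1 / c) = q := by
    funext k
    simp only [pMod, Set.mem_univ, if_true, hcAuniv, mul_assoc, hθkp k]
    field_simp
  -- mean for univ
  have hmean_univ : (∑' k : ℕ, (k : ℝ) * pMod p Set.univ (1 / c) k) = 1 := by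
    rw [hpuniv]; exact hG'1
  -- mean formula for {0}
  have hFmean : ∀ θ : ℝ, ∀ k : ℕ,
      (k : ℝ) * pMod p {0} θ k = ((k : ℝ) * q k * (θ * c) ^ (k - 1)) * (c / Gc) := by
    intro θ k
    cases k with
    | zero => simp
    | succ m =>
      simp only [pMod, Set.mem_singleton_iff, Nat.succ_ne_zero, if_false]
      have h1 : ((m + 1 : ℕ) : ℤ) - 1 = (m : ℤ) := by push_cast; ring
      rw [h1, zpow_natCast, hpdef]
      have h2 : m + 1 - 1 = m := rfl
      rw [h2, mul_pow, pow_succ]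
      field_simp
  have hmean0 : (∑' k : ℕ, (k : ℝ) * pMod p {0} (1 / c) k) = c / Gc := by
    have heq : ∀ k : ℕ, (k : ℝ) * pMod p {0} (1 / c) k = ((k : ℝ) * q k) * (c / Gc) := by
      intro k
      rw [hFmean (1 / c) k, one_div, inv_mul_cancel₀ hc0.ne', one_pow, mul_one]
    rw [tsum_congr heq, tsum_mul_right, hG'1, one_mul]
  have hfrac : c / Gc < 1 := (div_lt_one hGcpos).mpr hGc
  refine ⟨hGc, hrad1, hrad2, hmean_univ, hmean0, hfrac, ?_, ?_⟩
  · refine ⟨1 / c, ⟨by positivity, ?_, ?_⟩, hmean_univ⟩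
    · intro k; rw [hpuniv]; exact hq k
    · rw [hpuniv]; exact hqsum
  · rintro ⟨θ, ⟨hθpos, -, -⟩, hmean⟩
    set s := θ * c with hs
    have hspos : 0 < s := mul_pos hθpos hc0
    have hcGc : 0 ≤ c / Gc := by positivity
    by_cases hs1 : s ≤ 1
    · have hb : ∀ k : ℕ, (k : ℝ) * pMod p {0} θ k ≤ ((k : ℝ) * q k) * (c / Gc) := by
        intro k
        rw [hFmean θ k, ← hs]
        have h1 : s ^ (k - 1) ≤ 1 := pow_le_one₀ hspos.le hs1
        have h0 : (0 : ℝ) ≤ (k : ℝ) * q k := mul_nonneg (Nat.cast_nonneg k) (hq k)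
        nlinarith [mul_nonneg (mul_nonneg h0 hcGc) (sub_nonneg.mpr h1)]
      have hnn : ∀ k : ℕ, 0 ≤ (k : ℝ) * pMod p {0} θ k := by
        intro k
        rw [hFmean θ k]
        have := hq k
        positivity
      have hbS : Summable (fun k : ℕ => ((k : ℝ) * q k) * (c / Gc)) := hGmean.mul_right _
      have hFS : Summable (fun k : ℕ => (k : ℝ) * pMod p {0} θ k) :=
        Summable.of_nonneg_of_le hnn hb hbS
      have hle : (∑' k : ℕ, (k : ℝ) * pMod p {0} θ k) ≤ c / Gc := by
        calc (∑' k : ℕ, (k : ℝ) * pMod p {0} θ k)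
            ≤ ∑' k : ℕ, ((k : ℝ) * q k) * (c / Gc) := Summable.tsum_le_tsum hb hFS hbS
          _ = c / Gc := by rw [tsum_mul_right, hG'1, one_mul]
      rw [hmean] at hle
      linarith
    · push_neg at hs1
      have hns : ¬ Summable (fun k : ℕ => (k : ℝ) * pMod p {0} θ k) := by
        intro hS
        have hS1 : Summable (fun k : ℕ => (k : ℝ) * q k * s ^ (k - 1)) := by
          refine (hS.mul_right (Gc / c)).congr fun k => ?_
          rw [hFmean θ k]
          field_simp
          rw [hs]
        have hS2 : Summable (fun k : ℕ => ((k + 1 : ℕ) : ℝ) * q (k + 1) * s ^ k * s) := by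
          refine Summable.mul_right s ?_
          refine ((summable_nat_add_iff 1).mpr hS1).congr fun k => ?_
          simp
        have hS3 : Summable (fun k : ℕ => q (k + 1) * s ^ (k + 1)) := by
          refine Summable.of_nonneg_of_le (fun k => mul_nonneg (hq _) (pow_nonneg hspos.le _)) (fun k => ?_) hS2
          have h1 : (1 : ℝ) ≤ ((k + 1 : ℕ) : ℝ) := by exact_mod_cast Nat.one_le_iff_ne_zero.mpr (Nat.succ_ne_zero k)
          have h2 : (0:ℝ) ≤ s ^ k := pow_nonneg hspos.le k
          have h3 := hq (k + 1)
          rw [pow_succ]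
          nlinarith [mul_nonneg (mul_nonneg (mul_nonneg h3 h2) hspos.le) (sub_nonneg.mpr h1)]
        exact hradG s hs1 ((summable_nat_add_iff 1).mp hS3)
      rw [tsum_eq_zero_of_not_summable hns] at hmean
      norm_num at hmean
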